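/- If closed subspaces α, β of a complex Hilbert space commute and a ray x is not orthogonal to α, then p(x, α ∧ β) = p(x,α) · p(α(x), β). -/

import Mathlib

local notation "⟪" x ", " y "⟫" => @inner ℂ _ _ x y

theorem p_conjunction_conditional {H : Type*} [NormedAddCommGroup H]
    [InnerProductSpace ℂ H] [CompleteSpace H]
    (α β : Submodule ℂ H)
    (hαc : IsClosed (α : Set H)) (hβc : IsClosed (β : Set H))
    [CompleteSpace α] [CompleteSpace β]
    [CompleteSpace (α ⊓ β : Submodule ℂ H)]
    (hcomm : ∀ w : H,
      (Submodule.orthogonalProjectionOnto α ((Submodule.orthogonalProjectionOnto β w : H)) : H) =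
      (Submodule.orthogonalProjectionOnto β ((Submodule.orthogonalProjectionOnto α w : H)) : H))
    (x : Submodule ℂ H) (u : H) (hu : u ≠ 0) (hx : x = Submodule.span ℂ {u})
    (hno : ¬ ∀ a ∈ x, ∀ b ∈ α, ⟪a, b⟫ = 0) :
    ‖(Submodule.orthogonalProjectionOnto (α ⊓ β : Submodule ℂ H) u : H)‖ ^ 2 / ‖u‖ ^ 2 =
      (‖(Submodule.orthogonalProjectionOnto α u : H)‖ ^ 2 / ‖u‖ ^ 2) *
      (‖(Submodule.orthogonalProjectionOnto β ((Submodule.orthogonalProjectionOnto α u : H)) : H)‖ ^ 2 /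
        ‖(Submodule.orthogonalProjectionOnto α u : H)‖ ^ 2) := by
  -- key: P_{α⊓β} u = P_β (P_α u)
  set v : H := (Submodule.orthogonalProjectionOnto β ((Submodule.orthogonalProjectionOnto α u : H)) : H) with hv
  have hvα : v ∈ α := by
    rw [hv, ← hcomm u]
    exact (Submodule.orthogonalProjectionOnto α _).2
  have hvβ : v ∈ β := (Submodule.orthogonalProjectionOnto β _).2
  have hkey : (Submodule.orthogonalProjectionOnto (α ⊓ β : Submodule ℂ H) u : H) = v := by
    rw [← Submodule.starProjection_apply]
    apply Submodule.eq_starProjection_of_mem_of_inner_eq_zero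
    · exact ⟨hvα, hvβ⟩
    · intro w hw
      have hwα : w ∈ α := hw.1
      have hwβ : w ∈ β := hw.2
      have h1 : ⟪v, w⟫ = ⟪u, w⟫ := by
        rw [hv]
        rw [← Submodule.starProjection_apply, ← Submodule.starProjection_apply,
          Submodule.inner_starProjection_left_eq_right,
          Submodule.starProjection_eq_self_iff.2 hwβ,
          Submodule.inner_starProjection_left_eq_right,
          Submodule.starProjection_eq_self_iff.2 hwα]
      rw [inner_sub_left, h1, sub_self]
  -- ‖P_α u‖ ≠ 0
  have hpa : (Submodule.orthogonalProjectionOnto α u : H) ≠ 0 := by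
    intro h0
    apply hno
    intro a ha b hb
    rw [hx, Submodule.mem_span_singleton] at ha
    obtain ⟨c, rfl⟩ := ha
    have : ⟪u, b⟫ = 0 := by
      have := Submodule.inner_starProjection_left_eq_right α u b
      rw [Submodule.starProjection_apply, h0, inner_zero_left] at this
      rw [Submodule.starProjection_eq_self_iff.2 hb] at this
      exact this.symm
    rw [inner_smul_left, this, mul_zero]
  have hnu : ‖u‖ ≠ 0 := norm_ne_zero_iff.2 hu
  have hnpa : ‖(Submodule.orthogonalProjectionOnto α u : H)‖ ≠ 0 := norm_ne_zero_iff.2 hpa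
  rw [hkey]
  field_simp
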